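/- Fix c > 0. The function x ↦ (B_c(x) - R_c(x)) / (x(c-x)) is positive and strictly decreasing on (0, c/2], where B_c(x) = Γ(x)Γ(c-x)/Γ(c) and R_c(x) = -ψ(x) - ψ(c-x) - 2γ. -/

import Mathlib

open Filter Topology Set

noncomputable def digamma (x : ℝ) : ℝ := deriv (fun y : ℝ => Real.log (Real.Gamma y)) x

noncomputable def Bc (c x : ℝ) : ℝ := Real.Gamma x * Real.Gamma (c - x) / Real.Gamma c

noncomputable def Rc (c x : ℝ) : ℝ :=
  -digamma x - digamma (c - x) - 2 * Real.eulerMascheroniConstant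

noncomputable section

def qq (c : ℝ) (n : ℕ) : ℝ := ((n : ℝ) + 1) * (((n : ℝ) + 1) + c)

def pp (c : ℝ) (N : ℕ) (u : ℝ) : ℝ := ∏ j ∈ Finset.range N, qq c j / (qq c j + u)

def TT (c u : ℝ) : ℝ := ∑' n : ℕ, 2 / (((n : ℝ) + 1) * (qq c n + u))

def tD (c : ℝ) (n : ℕ) (u : ℝ) : ℝ := c * ((1 - pp c (n + 1) u) / u * (1 / (qq c (n + 1) + u)))

def DD (c u : ℝ) : ℝ := ∑' n : ℕ, tD c n u

variable {c : ℝ}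

lemma qq_pos (hc : 0 < c) (n : ℕ) : 0 < qq c n := by
  have : (0:ℝ) < (n:ℝ) + 1 := by positivity
  have : (0:ℝ) < ((n:ℝ) + 1) + c := by linarith
  unfold qq; positivity

lemma qq_add_pos (hc : 0 < c) {u : ℝ} (hu : 0 ≤ u) (n : ℕ) : 0 < qq c n + u :=
  by linarith [qq_pos hc n]

lemma qq_ge (hc : 0 < c) (n : ℕ) : ((n:ℝ) + 1) ^ 2 ≤ qq c n := by
  have h1 : (0:ℝ) < (n:ℝ) + 1 := by positivity
  unfold qq; nlinarith

lemma summable_sq : Summable (fun n : ℕ => 1 / ((n : ℝ) + 1) ^ 2) := by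
  have := (Real.summable_one_div_nat_pow (p := 2)).mpr one_lt_two
  have h2 := (summable_nat_add_iff (f := fun n : ℕ => 1 / (n : ℝ) ^ 2) 1).mpr this
  refine h2.congr fun n => ?_
  push_cast; ring_nf

lemma summable_inv_qq (hc : 0 < c) {u : ℝ} (hu : 0 ≤ u) :
    Summable (fun n : ℕ => 1 / (qq c n + u)) := by
  refine Summable.of_nonneg_of_le (fun n => le_of_lt (by
    have := qq_add_pos hc hu n; positivity)) (fun n => ?_) summable_sq
  have h2 := qq_add_pos hc hu n
  rw [div_le_div_iff₀ h2 (by positivity)]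
  nlinarith [qq_ge hc n]

lemma summable_TT (hc : 0 < c) {u : ℝ} (hu : 0 ≤ u) :
    Summable (fun n : ℕ => 2 / (((n : ℝ) + 1) * (qq c n + u))) := by
  refine Summable.of_nonneg_of_le (fun n => le_of_lt (by
    have := qq_add_pos hc hu n; positivity))
    (fun n => ?_) ((summable_inv_qq hc hu).mul_left 2)
  have h1 : (0:ℝ) < (n:ℝ) + 1 := by positivity
  have h2 := qq_add_pos hc hu n
  rw [mul_one_div, div_le_div_iff₀ (by positivity) h2]
  nlinarith

/-- product of two nonneg antitone convex functions on `Ici 0` is convex -/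
lemma convexOn_mul_of_anti {f g : ℝ → ℝ} (hf : ConvexOn ℝ (Ici 0) f) (hg : ConvexOn ℝ (Ici 0) g)
    (hf0 : ∀ x ∈ Ici (0:ℝ), 0 ≤ f x) (hg0 : ∀ x ∈ Ici (0:ℝ), 0 ≤ g x)
    (hfa : AntitoneOn f (Ici 0)) (hga : AntitoneOn g (Ici 0)) :
    ConvexOn ℝ (Ici 0) (fun u => f u * g u) := by
  refine ⟨convex_Ici 0, fun x hx y hy a b ha hb hab => ?_⟩
  have hz : a • x + b • y ∈ Ici (0:ℝ) := (convex_Ici 0) hx hy ha hb hab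
  have h1 : f (a • x + b • y) ≤ a * f x + b * f y := hf.2 hx hy ha hb hab
  have h2 : g (a • x + b • y) ≤ a * g x + b * g y := hg.2 hx hy ha hb hab
  have hfz := hf0 _ hz
  have hgz := hg0 _ hz
  have key : 0 ≤ (f x - f y) * (g x - g y) := by
    rcases le_total x y with h | h
    · have := hfa hx hy h; have := hga hx hy h; nlinarith
    · have := hfa hy hx h; have := hga hy hx h; nlinarith
  have step1 : f (a • x + b • y) * g (a • x + b • y) ≤ (a * f x + b * f y) * (a * g x + b * g y) := by
    apply mul_le_mul h1 h2 hgz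
    have := hf0 _ hx; have := hf0 _ hy; positivity
  have step2 : (a * f x + b * f y) * (a * g x + b * g y) ≤ a * (f x * g x) + b * (f y * g y) := by
    have hb' : b = 1 - a := by linarith
    subst hb'
    nlinarith [mul_nonneg (mul_nonneg ha hb) key]
  calc f (a • x + b • y) * g (a • x + b • y) ≤ _ := step1
    _ ≤ _ := step2

lemma convexOn_factor (hc : 0 < c) (q : ℝ) (hq : 0 < q) :
    ConvexOn ℝ (Ici 0) (fun u : ℝ => q / (q + u)) := by
  refine ⟨convex_Ici 0, fun x hx y hy a b ha hb hab => ?_⟩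
  have hx' : (0:ℝ) ≤ x := hx
  have hy' : (0:ℝ) ≤ y := hy
  have hA : 0 < q + x := by linarith
  have hB : 0 < q + y := by linarith
  have hz : 0 < q + (a • x + b • y) := by
    simp only [smul_eq_mul]
    nlinarith
  simp only [smul_eq_mul] at *
  rw [div_le_iff₀ hz]
  have e1 : a * (q / (q + x)) = a * q / (q + x) := by ring
  have e2 : b * (q / (q + y)) = b * q / (q + y) := by ring
  rw [e1, e2, div_add_div _ _ (ne_of_gt hA) (ne_of_gt hB), div_mul_eq_mul_div,
    le_div_iff₀ (by positivity)]
  have hb' : b = 1 - a := by linarith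
  subst hb'
  nlinarith [mul_nonneg (mul_nonneg (mul_nonneg hq.le ha) hb) (sq_nonneg (x - y))]

lemma pp_props (hc : 0 < c) (N : ℕ) :
    ConvexOn ℝ (Ici 0) (pp c N) ∧ AntitoneOn (pp c N) (Ici 0) ∧
      (∀ u ∈ Ici (0:ℝ), 0 ≤ pp c N u) := by
  induction N with
  | zero =>
    constructor
    · have hpp0 : pp c 0 = fun _ => (1:ℝ) := by funext u; simp [pp]
      rw [hpp0]; exact convexOn_const (1:ℝ) (convex_Ici 0)
    constructor
    · intro a _ b _ _; simp [pp]
    · intro u _; simp [pp]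
  | succ N ih =>
    obtain ⟨ihc, iha, ih0⟩ := ih
    have hfact : ∀ u ∈ Ici (0:ℝ), (0:ℝ) ≤ qq c N / (qq c N + u) := by
      intro u hu
      have h1 := qq_pos hc N
      have h2 : 0 < qq c N + u := by have : (0:ℝ) ≤ u := hu; linarith
      positivity
    have hfanti : AntitoneOn (fun u : ℝ => qq c N / (qq c N + u)) (Ici 0) := by
      intro a ha b hb hab
      have h1 := qq_pos hc N
      have ha' : (0:ℝ) ≤ a := ha
      apply div_le_div_of_nonneg_left h1.le (by linarith) (by linarith)
    have heq : ∀ u, pp c (N+1) u = pp c N u * (qq c N / (qq c N + u)) := by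
      intro u; rw [pp, Finset.prod_range_succ]; rfl
    constructor
    · exact ConvexOn.congr (convexOn_mul_of_anti ihc (convexOn_factor hc _ (qq_pos hc N))
        ih0 hfact iha hfanti) (fun u _ => (heq u).symm)
    constructor
    · intro a ha b hb hab
      rw [heq, heq]
      exact mul_le_mul (iha ha hb hab) (hfanti ha hb hab) (hfact b hb) (ih0 a ha)
    · intro u hu
      rw [heq]
      exact mul_nonneg (ih0 u hu) (hfact u hu)

lemma pp_zero (hc : 0 < c) (N : ℕ) : pp c N 0 = 1 := by
  rw [pp]
  apply Finset.prod_eq_one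
  intro j _
  rw [add_zero, div_self (qq_pos hc j).ne']

lemma pp_le_one (hc : 0 < c) (N : ℕ) {u : ℝ} (hu : 0 ≤ u) : pp c N u ≤ 1 := by
  have := (pp_props hc N).2.1 (self_mem_Ici) (show u ∈ Ici (0:ℝ) from hu) hu
  rwa [pp_zero hc N] at this

lemma pp_nonneg (hc : 0 < c) (N : ℕ) {u : ℝ} (hu : 0 ≤ u) : 0 ≤ pp c N u :=
  (pp_props hc N).2.2 u hu

lemma one_sub_pp_div_anti (hc : 0 < c) (N : ℕ) {a b : ℝ} (ha : 0 < a) (hab : a ≤ b) :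
    (1 - pp c N b) / b ≤ (1 - pp c N a) / a := by
  rcases eq_or_lt_of_le hab with rfl | hab'
  · exact le_refl _
  have hb : 0 < b := lt_trans ha hab'
  have hmono := (pp_props hc N).1.slope_mono (x := 0) self_mem_Ici
    (show a ∈ Ici (0:ℝ) \ {0} from ⟨ha.le, ha.ne'⟩)
    (show b ∈ Ici (0:ℝ) \ {0} from ⟨hb.le, hb.ne'⟩) hab
  rw [slope_def_field, slope_def_field, pp_zero hc N] at hmono
  have h1 : (pp c N a - 1) / (a - 0) ≤ (pp c N b - 1) / (b - 0) := hmono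
  rw [sub_zero, sub_zero] at h1
  have := neg_le_neg h1
  rw [← neg_div, ← neg_div, neg_sub, neg_sub] at this
  exact this

lemma tD_nonneg (hc : 0 < c) (n : ℕ) {u : ℝ} (hu : 0 < u) : 0 ≤ tD c n u := by
  have h1 := pp_le_one hc (n+1) hu.le
  have h2 := qq_add_pos hc hu.le (n+1)
  have : 0 ≤ (1 - pp c (n+1) u) / u := by
    apply div_nonneg (by linarith) hu.le
  rw [tD]
  positivity

lemma tD_le (hc : 0 < c) (n : ℕ) {a b : ℝ} (ha : 0 < a) (hab : a ≤ b) :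
    tD c n b ≤ tD c n a := by
  have hb : 0 < b := lt_of_lt_of_le ha hab
  rw [tD, tD]
  have h1 : (1 - pp c (n+1) b) / b ≤ (1 - pp c (n+1) a) / a := one_sub_pp_div_anti hc _ ha hab
  have h2 : (1:ℝ) / (qq c (n+1) + b) ≤ 1 / (qq c (n+1) + a) := by
    apply div_le_div_of_nonneg_left one_pos.le (qq_add_pos hc ha.le _) (by linarith)
  have h3 : 0 ≤ (1 - pp c (n+1) b) / b :=
    div_nonneg (by linarith [pp_le_one hc (n+1) hb.le]) hb.le
  have h4 : 0 ≤ (1:ℝ) / (qq c (n+1) + a) := by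
    have := qq_add_pos hc ha.le (n+1); positivity
  have h5 : 0 ≤ (1:ℝ) / (qq c (n+1) + b) := by
    have := qq_add_pos hc hb.le (n+1); positivity
  have h6 : 0 ≤ (1 - pp c (n+1) a) / a :=
    div_nonneg (by linarith [pp_le_one hc (n+1) ha.le]) ha.le
  exact mul_le_mul_of_nonneg_left (mul_le_mul h1 h2 h5 h6) hc.le

lemma summable_tD (hc : 0 < c) {u : ℝ} (hu : 0 < u) : Summable (fun n => tD c n u) := by
  have hs : Summable (fun n : ℕ => 1 / (qq c (n+1) + u)) :=
    (summable_nat_add_iff 1).mpr (summable_inv_qq hc hu.le)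
  refine Summable.of_nonneg_of_le (fun n => tD_nonneg hc n hu) (fun n => ?_)
    ((hs.mul_left (c / u)))
  rw [tD]
  have h2 := qq_add_pos hc hu.le (n+1)
  have h3 := pp_nonneg hc (n+1) hu.le
  have h1 : (1 - pp c (n+1) u) / u ≤ 1 / u := by
    gcongr
    · linarith
  calc c * ((1 - pp c (n+1) u) / u * (1 / (qq c (n+1) + u)))
      ≤ c * (1 / u * (1 / (qq c (n+1) + u))) := by
        apply mul_le_mul_of_nonneg_left ?_ hc.le
        apply mul_le_mul_of_nonneg_right h1 (by positivity)
    _ = c / u * (1 / (qq c (n+1) + u)) := by ring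

lemma DD_nonneg (hc : 0 < c) {u : ℝ} (hu : 0 < u) : 0 ≤ DD c u :=
  tsum_nonneg (fun n => tD_nonneg hc n hu)

lemma DD_le (hc : 0 < c) {a b : ℝ} (ha : 0 < a) (hab : a ≤ b) : DD c b ≤ DD c a :=
  Summable.tsum_le_tsum (fun n => tD_le hc n ha hab) (summable_tD hc (lt_of_lt_of_le ha hab))
    (summable_tD hc ha)

lemma TT_pos (hc : 0 < c) {u : ℝ} (hu : 0 < u) : 0 < TT c u := by
  refine Summable.tsum_pos (summable_TT hc hu.le) (fun n => ?_) 0 ?_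
  · have := qq_add_pos hc hu.le n; positivity
  · have := qq_add_pos hc hu.le 0; positivity

lemma TT_lt (hc : 0 < c) {a b : ℝ} (ha : 0 < a) (hab : a < b) : TT c b < TT c a := by
  have hb : 0 < b := lt_trans ha hab
  refine Summable.tsum_lt_tsum (i := 0) (fun n => ?_) ?_ (summable_TT hc hb.le) (summable_TT hc ha.le)
  · have h1 : (0:ℝ) < (n:ℝ) + 1 := by positivity
    have h2 := qq_add_pos hc ha.le n
    apply div_le_div_of_nonneg_left (by norm_num) (by positivity) ?_
    nlinarith
  · have h1 : (0:ℝ) < (0:ℕ) + (1:ℝ) := by norm_num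
    have h2 := qq_add_pos hc ha.le 0
    apply div_lt_div_of_pos_left (by norm_num) (by positivity) ?_
    have : (0:ℕ) + (1:ℝ) = 1 := by norm_num
    nlinarith

def AA (s : ℝ) (n : ℕ) : ℝ := ∏ j ∈ Finset.range (n + 1), (s + j)

lemma AA_pos {s : ℝ} (hs : 0 < s) (n : ℕ) : 0 < AA s n := by
  apply Finset.prod_pos
  intro j _
  positivity

lemma key_fact {x : ℝ} (k : ℕ) : (x + ((k:ℝ)+1)) * ((c - x) + ((k:ℝ)+1)) = qq c k + x * (c - x) := by
  rw [qq]; ring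

lemma pp_eq_Q (hc : 0 < c) {x : ℝ} (hx : 0 < x) (hxc : x < c) (n : ℕ) :
    pp c n (x * (c - x)) = (x * (c - x) / c) * ((Nat.factorial n : ℝ) * AA c n / (AA x n * AA (c - x) n)) := by
  have hy : 0 < c - x := by linarith
  induction n with
  | zero =>
    simp only [pp, Finset.range_zero, Finset.prod_empty, AA, Finset.range_one,
      Finset.prod_singleton, Nat.factorial_zero, Nat.cast_zero, Nat.cast_one, add_zero, one_mul]
    field_simp
    simp only [zero_add, Finset.prod_range_one, Nat.cast_zero, add_zero]
    ring
  | succ n ih =>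
    have hAx := AA_pos hx n
    have hAy := AA_pos hy n
    have hAc := AA_pos hc n
    have hq := qq_pos hc n
    have hqu : 0 < qq c n + x * (c - x) := by positivity
    have hAs : ∀ s : ℝ, AA s (n+1) = AA s n * (s + ((n:ℝ)+1)) := by
      intro s
      rw [AA, AA, Finset.prod_range_succ]
      push_cast; ring
    have hfac : (Nat.factorial (n+1) : ℝ) = (Nat.factorial n : ℝ) * ((n:ℝ)+1) := by
      rw [Nat.factorial_succ]; push_cast; ring
    have hpp : pp c (n+1) (x*(c-x)) = pp c n (x*(c-x)) * (qq c n / (qq c n + x*(c-x))) := by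
      rw [pp, pp, Finset.prod_range_succ]
    have hkey : qq c n + x * (c - x) = (x + ((n:ℝ)+1)) * ((c - x) + ((n:ℝ)+1)) :=
      (key_fact n).symm
    have hqq : qq c n = ((n:ℝ)+1) * (c + ((n:ℝ)+1)) := by rw [qq]; ring
    rw [hpp, ih, hAs x, hAs (c-x), hAs c, hfac]
    set U := x * (c - x) with hU
    set X := x + ((n:ℝ)+1) with hX
    set Y := (c - x) + ((n:ℝ)+1) with hY
    set C2 := c + ((n:ℝ)+1) with hC2
    have hXp : 0 < X := by rw [hX]; positivity
    have hYp : 0 < Y := by rw [hY]; positivity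
    have hC2p : 0 < C2 := by rw [hC2]; positivity
    have hUp : 0 < U := by rw [hU]; positivity
    rw [hkey, hqq]
    have hn1 : (0:ℝ) < (n:ℝ)+1 := by positivity
    field_simp
lemma gseq_eq (hc : 0 < c) {x : ℝ} (hx : 0 < x) (hxc : x < c) {n : ℕ} (hn : 1 ≤ n) :
    Real.GammaSeq x n * Real.GammaSeq (c - x) n / Real.GammaSeq c n
      = (Nat.factorial n : ℝ) * AA c n / (AA x n * AA (c - x) n) := by
  have hy : 0 < c - x := by linarith
  have ht : (0:ℝ) < (n:ℝ) := by exact_mod_cast hn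
  have hpow : (n:ℝ) ^ x * (n:ℝ) ^ (c - x) = (n:ℝ) ^ c := by
    rw [← Real.rpow_add ht]; ring_nf
  have hAx := AA_pos hx n
  have hAy := AA_pos hy n
  have hAc := AA_pos hc n
  have hnc : (0:ℝ) < (n:ℝ) ^ c := Real.rpow_pos_of_pos ht c
  have hfa : (0:ℝ) < (Nat.factorial n : ℝ) := by exact_mod_cast Nat.factorial_pos n
  rw [Real.GammaSeq, Real.GammaSeq, Real.GammaSeq]
  show (n:ℝ) ^ x * (Nat.factorial n : ℝ) / AA x n * ((n:ℝ) ^ (c-x) * (Nat.factorial n : ℝ) / AA (c-x) n)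
      / ((n:ℝ) ^ c * (Nat.factorial n : ℝ) / AA c n) = (Nat.factorial n : ℝ) * AA c n / (AA x n * AA (c - x) n)
  field_simp
  rw [← hpow]

lemma tendsto_pp (hc : 0 < c) {x : ℝ} (hx : 0 < x) (hxc : x < c) :
    Filter.Tendsto (fun n => pp c n (x * (c - x))) Filter.atTop
      (𝓝 (x * (c - x) / c * Bc c x)) := by
  have hy : 0 < c - x := by linarith
  have hgc : Real.Gamma c ≠ 0 := (Real.Gamma_pos_of_pos hc).ne'
  have h1 : Filter.Tendsto
      (fun n => Real.GammaSeq x n * Real.GammaSeq (c-x) n / Real.GammaSeq c n)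
      Filter.atTop (𝓝 (Real.Gamma x * Real.Gamma (c-x) / Real.Gamma c)) :=
    ((Real.GammaSeq_tendsto_Gamma x).mul (Real.GammaSeq_tendsto_Gamma (c-x))).div
      (Real.GammaSeq_tendsto_Gamma c) hgc
  have h2 := h1.const_mul (x * (c - x) / c)
  rw [show Real.Gamma x * Real.Gamma (c-x) / Real.Gamma c = Bc c x from rfl] at h2
  apply Filter.Tendsto.congr' _ h2
  filter_upwards [Filter.eventually_ge_atTop 1] with n hn
  rw [gseq_eq hc hx hxc hn, ← pp_eq_Q hc hx hxc n]

lemma partial_tD (hc : 0 < c) {u : ℝ} (hu : 0 < u) (M : ℕ) :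
    ∑ n ∈ Finset.range M, tD c n u
      = (c / u) * ∑ j ∈ Finset.range (M + 1), 1 / (qq c j + u)
        - c * (1 - pp c (M + 1) u) / u ^ 2 := by
  induction M with
  | zero =>
    simp only [Finset.range_zero, Finset.sum_empty, Finset.range_one, Finset.sum_singleton]
    simp only [zero_add, Finset.sum_range_one]
    have h0 := qq_add_pos hc hu.le 0
    have hpp1 : pp c 1 u = qq c 0 / (qq c 0 + u) := by
      rw [pp, Finset.prod_range_one]
    rw [hpp1]
    field_simp
    ring
  | succ M ih =>
    rw [Finset.sum_range_succ, ih]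
    have hq := qq_add_pos hc hu.le (M+1)
    have hpp : pp c (M+2) u = pp c (M+1) u * (qq c (M+1) / (qq c (M+1) + u)) := by
      rw [pp, pp, Finset.prod_range_succ]
    rw [Finset.sum_range_succ (f := fun j => 1 / (qq c j + u)) (n := M+1)]
    rw [tD, hpp]
    field_simp
    ring

lemma DD_eq (hc : 0 < c) {x : ℝ} (hx : 0 < x) (hxc : x < c) :
    DD c (x * (c - x)) = (c / (x * (c - x))) * (∑' j : ℕ, 1 / (qq c j + x * (c - x)))
      - c / (x * (c - x)) ^ 2 + Bc c x / (x * (c - x)) := by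
  have hy : 0 < c - x := by linarith
  have hu : 0 < x * (c - x) := by positivity
  set u := x * (c - x) with hudef
  have hsum : Summable (fun j : ℕ => 1 / (qq c j + u)) := summable_inv_qq hc hu.le
  have hW : Filter.Tendsto (fun M => ∑ n ∈ Finset.range M, tD c n u) Filter.atTop
      (𝓝 ((c / u) * (∑' j : ℕ, 1 / (qq c j + u)) - c * (1 - u / c * Bc c x) / u ^ 2)) := by
    have h1 : Filter.Tendsto (fun M : ℕ => ∑ j ∈ Finset.range (M + 1), 1 / (qq c j + u))
        Filter.atTop (𝓝 (∑' j : ℕ, 1 / (qq c j + u))) :=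
      hsum.hasSum.tendsto_sum_nat.comp (tendsto_add_atTop_nat 1)
    have h2 : Filter.Tendsto (fun M : ℕ => pp c (M + 1) u) Filter.atTop
        (𝓝 (u / c * Bc c x)) := (tendsto_pp hc hx hxc).comp (tendsto_add_atTop_nat 1)
    have h3 := (h1.const_mul (c / u)).sub
      (((tendsto_const_nhds (x := (1:ℝ)) ).sub h2).const_mul c |>.div_const (u ^ 2))
    simpa only [partial_tD hc hu, mul_div_assoc] using h3
  have hHasSum : HasSum (fun n => tD c n u)
      ((c / u) * (∑' j : ℕ, 1 / (qq c j + u)) - c * (1 - u / c * Bc c x) / u ^ 2) :=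
    (hasSum_iff_tendsto_nat_of_nonneg (fun n => tD_nonneg hc n hu) _).mpr hW
  rw [DD, hHasSum.tsum_eq]
  field_simp
  ring

lemma summable_psi_terms {y : ℝ} (hy : 0 < y) :
    Summable (fun k : ℕ => 1 / ((k:ℝ) + 1) - 1 / (y + ((k:ℝ) + 1))) := by
  refine Summable.of_nonneg_of_le (fun k => ?_) (fun k => ?_) (summable_sq.mul_left y)
  · have h1 : (0:ℝ) < (k:ℝ) + 1 := by positivity
    have h2 : (0:ℝ) < y + ((k:ℝ) + 1) := by positivity
    rw [sub_nonneg]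
    apply div_le_div_of_nonneg_left one_pos.le h1 (by linarith)
  · have h1 : (0:ℝ) < (k:ℝ) + 1 := by positivity
    have h2 : (0:ℝ) < y + ((k:ℝ) + 1) := by positivity
    have e1 : 1 / ((k:ℝ) + 1) - 1 / (y + ((k:ℝ) + 1)) = y / (((k:ℝ) + 1) * (y + ((k:ℝ) + 1))) := by
      field_simp
      ring
    rw [e1, mul_one_div, div_le_div_iff₀ (by positivity) (by positivity)]
    nlinarith [mul_nonneg (mul_nonneg hy.le h1.le) hy.le]

lemma hasSum_telescope {n : ℕ} (hn : 1 ≤ n) :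
    HasSum (fun k : ℕ => 1 / ((n:ℝ) + (k:ℝ)) - 1 / ((n:ℝ) + (k:ℝ) + 1)) (1 / (n:ℝ)) := by
  have hnn : (0:ℝ) < (n:ℝ) := by exact_mod_cast hn
  rw [hasSum_iff_tendsto_nat_of_nonneg]
  · have hps : ∀ N : ℕ, ∑ i ∈ Finset.range N, (1 / ((n:ℝ) + (i:ℝ)) - 1 / ((n:ℝ) + (i:ℝ) + 1))
        = 1 / ((n:ℝ) + (0:ℕ)) - 1 / ((n:ℝ) + (N:ℝ)) := by
      intro N
      have := Finset.sum_range_sub' (fun k : ℕ => 1 / ((n:ℝ) + (k:ℝ))) N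
      rw [← this]
      apply Finset.sum_congr rfl
      intro i _
      push_cast
      ring_nf
    simp only [hps, Nat.cast_zero, add_zero]
    have h0 : Filter.Tendsto (fun N : ℕ => 1 / ((n:ℝ) + (N:ℝ))) Filter.atTop (𝓝 0) := by
      simp only [one_div]
      apply Filter.Tendsto.inv_tendsto_atTop
      exact Filter.tendsto_atTop_add_const_left _ _ tendsto_natCast_atTop_atTop
    simpa using tendsto_const_nhds.sub h0
  · intro k
    have h1 : (0:ℝ) < (n:ℝ) + (k:ℝ) := by positivity
    rw [sub_nonneg]
    apply div_le_div_of_nonneg_left one_pos.le h1 (by linarith)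

lemma tail_bound {y Y : ℝ} (hy : 0 < y) (hyY : y ≤ Y) {n : ℕ} (hn : 1 ≤ n) :
    ∑' k : ℕ, (1 / ((↑(k + n):ℝ) + 1) - 1 / (y + ((↑(k + n):ℝ) + 1))) ≤ Y / (n:ℝ) := by
  have hnn : (0:ℝ) < (n:ℝ) := by exact_mod_cast hn
  have hY : 0 < Y := lt_of_lt_of_le hy hyY
  have hs1 : Summable (fun k : ℕ => 1 / ((↑(k + n):ℝ) + 1) - 1 / (y + ((↑(k + n):ℝ) + 1))) :=
    (summable_nat_add_iff (f := fun k : ℕ => 1 / ((k:ℝ) + 1) - 1 / (y + ((k:ℝ) + 1))) n).mpr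
      (summable_psi_terms hy)
  have htel := hasSum_telescope (n := n) hn
  refine le_trans (Summable.tsum_le_tsum (fun k => ?_) hs1 (htel.summable.mul_left Y)) ?_
  · have h1 : (0:ℝ) < (k:ℝ) + (n:ℝ) + 1 := by positivity
    have h2 : (0:ℝ) < y + ((k:ℝ) + (n:ℝ) + 1) := by positivity
    have h3 : (0:ℝ) < (n:ℝ) + (k:ℝ) := by positivity
    have e0 : ((↑(k + n):ℝ) + 1) = (k:ℝ) + (n:ℝ) + 1 := by push_cast; ring
    rw [e0]
    have e1 : 1 / ((k:ℝ) + (n:ℝ) + 1) - 1 / (y + ((k:ℝ) + (n:ℝ) + 1))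
        = y / (((k:ℝ) + (n:ℝ) + 1) * (y + ((k:ℝ) + (n:ℝ) + 1))) := by
      field_simp
      ring
    have e2 : 1 / ((n:ℝ) + (k:ℝ)) - 1 / ((n:ℝ) + (k:ℝ) + 1)
        = 1 / (((n:ℝ) + (k:ℝ)) * ((n:ℝ) + (k:ℝ) + 1)) := by
      field_simp
      ring
    rw [e1, e2, mul_one_div, div_le_div_iff₀ (by positivity) (by positivity)]
    calc y * (((n:ℝ) + (k:ℝ)) * ((n:ℝ) + (k:ℝ) + 1))
        ≤ y * (((k:ℝ) + (n:ℝ) + 1) * ((k:ℝ) + (n:ℝ) + 1)) := by nlinarith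
      _ ≤ Y * (((k:ℝ) + (n:ℝ) + 1) * (y + ((k:ℝ) + (n:ℝ) + 1))) := by
          nlinarith [mul_nonneg (sub_nonneg.2 hyY) (mul_pos h1 h1).le,
            mul_nonneg (mul_nonneg hY.le hy.le) h1.le]
  · rw [tsum_mul_left, htel.tsum_eq]
    rw [mul_one_div]

lemma harmonic_cast (n : ℕ) :
    ((harmonic n : ℚ) : ℝ) = ∑ k ∈ Finset.range n, 1 / ((k:ℝ) + 1) := by
  unfold harmonic
  push_cast
  apply Finset.sum_congr rfl
  intro i _
  rw [one_div]

lemma hasDerivAt_logGamma {x : ℝ} (hx : 0 < x) :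
    HasDerivAt (fun y : ℝ => Real.log (Real.Gamma y))
      (-Real.eulerMascheroniConstant - 1 / x
        + ∑' k : ℕ, (1 / ((k:ℝ) + 1) - 1 / (x + ((k:ℝ) + 1)))) x := by
  have hs : IsOpen (Ioo (x/2) (x+1)) := isOpen_Ioo
  set g' : ℝ → ℝ := fun y => -Real.eulerMascheroniConstant - 1 / y
      + ∑' k : ℕ, (1 / ((k:ℝ) + 1) - 1 / (y + ((k:ℝ) + 1))) with hg'
  set F' : ℕ → ℝ → ℝ := fun n y => Real.log n - ∑ m ∈ Finset.range (n+1), (y + (m:ℝ))⁻¹ with hF'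
  have hmem : x ∈ Ioo (x/2) (x+1) := ⟨by linarith, by linarith⟩
  have hderiv : ∀ᶠ n : ℕ in Filter.atTop, ∀ y ∈ Ioo (x/2) (x+1),
      HasDerivAt (fun z => Real.BohrMollerup.logGammaSeq z n) (F' n y) y := by
    filter_upwards with n
    intro y hy
    have hy0 : 0 < y := lt_trans (by linarith : (0:ℝ) < x/2) hy.1
    have h1 : HasDerivAt (fun z : ℝ => z * Real.log n + Real.log (Nat.factorial n))
        (Real.log n) y := (hasDerivAt_mul_const _).add_const _
    have h2 : HasDerivAt (fun z : ℝ => ∑ m ∈ Finset.range (n+1), Real.log (z + (m:ℝ)))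
        (∑ m ∈ Finset.range (n+1), (y + (m:ℝ))⁻¹) y := by
      apply HasDerivAt.fun_sum
      intro m _
      have hm0 : (0:ℝ) < y + m := by positivity
      have := ((hasDerivAt_id y).add_const (m:ℝ)).log hm0.ne'
      simpa using this
    have heq : (fun z => Real.BohrMollerup.logGammaSeq z n)
        = fun z => (z * Real.log n + Real.log (Nat.factorial n))
            - ∑ m ∈ Finset.range (n+1), Real.log (z + (m:ℝ)) := by
      funext z
      rw [Real.BohrMollerup.logGammaSeq]
    rw [heq]
    exact h1.sub h2
  have hptw : ∀ y ∈ Ioo (x/2) (x+1),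
      Filter.Tendsto (fun n => Real.BohrMollerup.logGammaSeq y n) Filter.atTop
        (𝓝 (Real.log (Real.Gamma y))) := by
    intro y hy
    exact Real.BohrMollerup.tendsto_log_gamma (lt_trans (by linarith) hy.1)
  have hunif : TendstoUniformlyOn F' g' Filter.atTop (Ioo (x/2) (x+1)) := by
    rw [Metric.tendstoUniformlyOn_iff]
    intro ε hε
    have h1 : ∀ᶠ n : ℕ in Filter.atTop,
        |((harmonic n : ℚ):ℝ) - Real.log n - Real.eulerMascheroniConstant| < ε/2 := by
      have h := Real.tendsto_harmonic_sub_log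
      rw [Metric.tendsto_nhds] at h
      filter_upwards [h (ε/2) (half_pos hε)] with n hn
      rw [Real.dist_eq] at hn
      convert hn using 2
    have h2 : ∀ᶠ n : ℕ in Filter.atTop, (x+1)/(n:ℝ) < ε/2 := by
      have ht : Filter.Tendsto (fun n:ℕ => (x+1)/(n:ℝ)) Filter.atTop (𝓝 0) :=
        tendsto_const_div_atTop_nhds_zero_nat (x+1)
      exact ht.eventually (gt_mem_nhds (half_pos hε))
    filter_upwards [h1, h2, Filter.eventually_ge_atTop 1] with n hn1 hn2 hn3
    intro y hy
    have hy0 : 0 < y := lt_trans (by linarith : (0:ℝ) < x/2) hy.1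
    have hyY : y ≤ x + 1 := le_of_lt hy.2
    have hsum := summable_psi_terms hy0
    have hsplit := Summable.sum_add_tsum_nat_add
      (f := fun k : ℕ => 1/((k:ℝ)+1) - 1/(y+((k:ℝ)+1))) n hsum
    set Tail := ∑' k : ℕ, (1 / ((↑(k + n):ℝ) + 1) - 1 / (y + ((↑(k + n):ℝ) + 1))) with hTail
    have hfin : ∑ k ∈ Finset.range n, (1/((k:ℝ)+1) - 1/(y+((k:ℝ)+1)))
        = ((harmonic n : ℚ):ℝ) - ∑ k ∈ Finset.range n, 1/(y+((k:ℝ)+1)) := by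
      rw [Finset.sum_sub_distrib, harmonic_cast]
    have hsum_split : ∑ m ∈ Finset.range (n+1), (y + (m:ℝ))⁻¹
        = 1/y + ∑ m ∈ Finset.range n, 1/(y + ((m:ℝ)+1)) := by
      rw [Finset.sum_range_succ' (fun m : ℕ => (y + (m:ℝ))⁻¹) n]
      simp only [Nat.cast_zero, add_zero, Nat.cast_add, Nat.cast_one, one_div]
      ring
    have hdiff : g' y - F' n y
        = (((harmonic n : ℚ):ℝ) - Real.log n - Real.eulerMascheroniConstant) + Tail := by
      have e : (∑' k : ℕ, (1/((k:ℝ)+1) - 1/(y+((k:ℝ)+1))))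
          = (((harmonic n : ℚ):ℝ) - ∑ k ∈ Finset.range n, 1/(y+((k:ℝ)+1))) + Tail := by
        rw [← hsplit, hfin]
      rw [hg', hF']
      simp only []
      rw [e, hsum_split]
      ring
    have hTail0 : 0 ≤ Tail := by
      apply tsum_nonneg
      intro k
      have hk1 : (0:ℝ) < (↑(k + n):ℝ) + 1 := by positivity
      rw [sub_nonneg]
      apply div_le_div_of_nonneg_left one_pos.le hk1 (by linarith)
    have hTailB : Tail ≤ (x+1)/n := tail_bound hy0 hyY hn3
    rw [Real.dist_eq]
    calc |g' y - F' n y|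
        ≤ |((harmonic n : ℚ):ℝ) - Real.log n - Real.eulerMascheroniConstant| + |Tail| := by
          rw [hdiff]; exact abs_add_le _ _
      _ < ε/2 + ε/2 := by
          apply add_lt_add hn1
          rw [abs_of_nonneg hTail0]
          exact lt_of_le_of_lt hTailB hn2
      _ = ε := by ring
  exact hasDerivAt_of_tendstoUniformlyOn hs hunif hderiv hptw hmem

lemma digamma_eq {x : ℝ} (hx : 0 < x) :
    digamma x = -Real.eulerMascheroniConstant - 1 / x
      + ∑' k : ℕ, (1 / ((k:ℝ) + 1) - 1 / (x + ((k:ℝ) + 1))) :=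
  (hasDerivAt_logGamma hx).deriv

lemma Rc_eq (hc : 0 < c) {x : ℝ} (hx : 0 < x) (hxc : x < c) :
    Rc c x = c / (x*(c-x))
      - (x*(c-x) * TT c (x*(c-x)) + c * ∑' j : ℕ, 1 / (qq c j + x*(c-x))) := by
  have hy : 0 < c - x := by linarith
  have hu : 0 < x*(c-x) := by positivity
  have hterm : ∀ k : ℕ, (1/((k:ℝ)+1) - 1/(x+((k:ℝ)+1))) + (1/((k:ℝ)+1) - 1/((c-x)+((k:ℝ)+1)))
      = x*(c-x) * (2/((((k:ℝ)+1))*(qq c k + x*(c-x)))) + c * (1/(qq c k + x*(c-x))) := by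
    intro k
    have hkey : qq c k + x*(c-x) = (x + ((k:ℝ)+1)) * ((c - x) + ((k:ℝ)+1)) := (key_fact k).symm
    have h1 : (0:ℝ) < (k:ℝ)+1 := by positivity
    have h2 : (0:ℝ) < x + ((k:ℝ)+1) := by positivity
    have h3 : (0:ℝ) < (c-x) + ((k:ℝ)+1) := by positivity
    rw [hkey]
    field_simp
    ring
  have hsx := summable_psi_terms hx
  have hsy := summable_psi_terms hy
  have hS1 : Summable (fun k : ℕ => x*(c-x) * (2/((((k:ℝ)+1))*(qq c k + x*(c-x))))) :=
    (summable_TT hc hu.le).mul_left _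
  have hS2 : Summable (fun k : ℕ => c * (1/(qq c k + x*(c-x)))) :=
    (summable_inv_qq hc hu.le).mul_left _
  have hsum_eq : (∑' k : ℕ, (1/((k:ℝ)+1) - 1/(x+((k:ℝ)+1))))
      + (∑' k : ℕ, (1/((k:ℝ)+1) - 1/((c-x)+((k:ℝ)+1))))
      = x*(c-x) * TT c (x*(c-x)) + c * ∑' j : ℕ, 1 / (qq c j + x*(c-x)) := by
    rw [← Summable.tsum_add hsx hsy]
    rw [show x*(c-x) * TT c (x*(c-x)) = ∑' k : ℕ, x*(c-x) * (2/((((k:ℝ)+1))*(qq c k + x*(c-x))))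
      from (tsum_mul_left).symm]
    rw [show c * ∑' j : ℕ, 1 / (qq c j + x*(c-x)) = ∑' k : ℕ, c * (1/(qq c k + x*(c-x)))
      from (tsum_mul_left).symm]
    rw [← Summable.tsum_add hS1 hS2]
    exact tsum_congr hterm
  rw [Rc, digamma_eq hx, digamma_eq hy, ← hsum_eq]
  have hxyc : 1/x + 1/(c-x) = c / (x*(c-x)) := by field_simp; ring
  linarith [hxyc]

lemma main_identity (hc : 0 < c) {x : ℝ} (hx : 0 < x) (hxc : x < c) :
    (Bc c x - Rc c x) / (x*(c-x)) = TT c (x*(c-x)) + DD c (x*(c-x)) := by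
  have hy : 0 < c - x := by linarith
  have hu : 0 < x*(c-x) := by positivity
  rw [Rc_eq hc hx hxc, DD_eq hc hx hxc]
  set S := ∑' j : ℕ, 1 / (qq c j + x*(c-x)) with hS
  set T := TT c (x*(c-x)) with hT
  set B := Bc c x with hB
  field_simp
  ring

theorem stmt_12 (c : ℝ) (hc : 0 < c) :
    (∀ x ∈ Set.Ioc 0 (c / 2), 0 < (Bc c x - Rc c x) / (x * (c - x))) ∧
      StrictAntiOn (fun x => (Bc c x - Rc c x) / (x * (c - x))) (Set.Ioc 0 (c / 2)) := by
  have hmain : ∀ x ∈ Set.Ioc 0 (c / 2),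
      (Bc c x - Rc c x) / (x * (c - x)) = TT c (x*(c-x)) + DD c (x*(c-x)) := by
    intro x hx
    exact main_identity hc hx.1 (by rcases hx with ⟨h1, h2⟩; linarith)
  constructor
  · intro x hx
    have hx0 := hx.1
    have hx2 := hx.2
    have hxc : x < c := by linarith
    have hu : 0 < x*(c-x) := by
      have : 0 < c - x := by linarith
      positivity
    rw [hmain x hx]
    have h1 := TT_pos hc hu
    have h2 := DD_nonneg hc hu
    linarith
  · intro a ha b hb hab
    have ha0 := ha.1
    have hb0 := hb.1
    have hac : a < c := by linarith [ha.2]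
    have hbc : b < c := by linarith [hb.2]
    have hua : 0 < a*(c-a) := by
      have : 0 < c - a := by linarith
      positivity
    have hlt : a*(c-a) < b*(c-b) := by
      nlinarith [mul_pos (sub_pos.2 hab) (show 0 < c - a - b by linarith [ha.2, hb.2])]
    simp only
    rw [hmain a ha, hmain b hb]
    have h1 := TT_lt hc hua hlt
    have h2 := DD_le hc hua hlt.le
    linarith

end
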